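/- With a single sample $j \sim P(i,\cdot)$ (Sample-cloning: set $j' = j$ in the estimator above), the expected update $\mathbb{E}[G]$ equals the gradient of the biased objective $\tilde{J}(v) = \tfrac{1}{2}\sum_i \mu_i \sum_j P(i,j)(r_i + \gamma v_j - v_i)^2$, which differs from $\nabla_v J$ by the gradient of the conditional variance term: $\tilde{J}(v) - J(v) = \tfrac{\gamma^2}{2}\sum_i \mu_i \mathrm{Var}_{j\sim P(i,\cdot)}[v_j]$. In particular, Sample-cloning minimizes $J(v) + \tfrac{\gamma^2}{2}\mathbb{E}_{i\sim\mu}\mathrm{Var}_{j\sim P(i,\cdot)}[v_j]$ rather than $J$. -/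

import Mathlib

/-- Sample-cloning bias: with a single sample (`j' = j`) the expected update is the
gradient of the biased objective `J̃(v) = ½∑_i μ_i ∑_j P(i,j)(r_i+γv_j−v_i)²`, which
exceeds `J` by `γ²/2` times the mean conditional variance of `v`. -/
theorem stmt16 {n : ℕ} (P : Matrix (Fin n) (Fin n) ℝ)
    (hP0 : ∀ i j, 0 ≤ P i j) (hP1 : ∀ i, ∑ j, P i j = 1)
    (γ : ℝ) (hγ : γ ∈ Set.Ioo (0:ℝ) 1)
    (μ : Fin n → ℝ) (hμ : ∀ i, 0 < μ i) (r : Fin n → ℝ) :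
    (∀ v : EuclideanSpace ℝ (Fin n),
      HasGradientAt
        (fun w : EuclideanSpace ℝ (Fin n) =>
          (1:ℝ) / 2 * ∑ i, μ i * ∑ j, P i j * (r i + γ * w j - w i) ^ 2)
        ((WithLp.equiv 2 (Fin n → ℝ)).symm fun l =>
          ∑ i, ∑ j, μ i * P i j *
            ((if l = i then -(r i + γ * v j - v i) else 0)
              + (if l = j then γ * (r i + γ * v j - v i) else 0))) v) ∧
    ∀ v : Fin n → ℝ,
      ((1:ℝ) / 2 * ∑ i, μ i * ∑ j, P i j * (r i + γ * v j - v i) ^ 2)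
        - ((1:ℝ) / 2 * ∑ i, μ i * (r i + γ * (∑ j, P i j * v j) - v i) ^ 2)
      = γ ^ 2 / 2 * ∑ i, μ i *
          ((∑ j, P i j * (v j) ^ 2) - (∑ j, P i j * v j) ^ 2) := by
  constructor
  · intro v
    -- per-term fderiv
    have hterm : ∀ i j : Fin n, HasFDerivAt (𝕜 := ℝ)
        (fun w : EuclideanSpace ℝ (Fin n) => (r i + γ * w j - w i) ^ 2)
        ((2 * (r i + γ * v j - v i)) •
          (γ • (EuclideanSpace.proj j : EuclideanSpace ℝ (Fin n) →L[ℝ] ℝ)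
            - (EuclideanSpace.proj i : EuclideanSpace ℝ (Fin n) →L[ℝ] ℝ))) v := by
      intro i j
      have h1 : HasFDerivAt (fun w : EuclideanSpace ℝ (Fin n) => r i + γ * w j - w i)
          (γ • (EuclideanSpace.proj j : EuclideanSpace ℝ (Fin n) →L[ℝ] ℝ)
            - (EuclideanSpace.proj i : EuclideanSpace ℝ (Fin n) →L[ℝ] ℝ)) v := by
        have h0 := ((hasFDerivAt_const (r i) v).add
          (((EuclideanSpace.proj (𝕜 := ℝ) j).hasFDerivAt (x := v)).const_mul γ)).sub
          ((EuclideanSpace.proj (𝕜 := ℝ) i).hasFDerivAt (x := v))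
        rw [zero_add] at h0
        exact h0
      have := h1.mul h1
      rw [show (fun w : EuclideanSpace ℝ (Fin n) => (r i + γ * w j - w i) ^ 2) = ((fun w : EuclideanSpace ℝ (Fin n) => r i + γ * w j - w i) * fun w => r i + γ * w j - w i) by ext w; simp [pow_two], two_mul, add_smul]
      exact this
    have hf : HasFDerivAt (𝕜 := ℝ)
        (fun w : EuclideanSpace ℝ (Fin n) =>
          (1:ℝ) / 2 * ∑ i, μ i * ∑ j, P i j * (r i + γ * w j - w i) ^ 2)
        (((1:ℝ)/2) • ∑ i, μ i • ∑ j, P i j •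
          ((2 * (r i + γ * v j - v i)) •
            (γ • (EuclideanSpace.proj j : EuclideanSpace ℝ (Fin n) →L[ℝ] ℝ)
              - (EuclideanSpace.proj i : EuclideanSpace ℝ (Fin n) →L[ℝ] ℝ)))) v := by
      apply HasFDerivAt.const_mul
      apply HasFDerivAt.fun_sum
      intro i _
      apply HasFDerivAt.const_mul
      apply HasFDerivAt.fun_sum
      intro j _
      exact (hterm i j).const_mul (P i j)
    rw [hasGradientAt_iff_hasFDerivAt]
    refine hf.congr_fderiv (Eq.symm ?_)
    ext w
    simp only [InnerProductSpace.toDual_apply_apply, PiLp.inner_apply, RCLike.inner_apply,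
      starRingEnd_apply, star_trivial, ContinuousLinearMap.smul_apply,
      ContinuousLinearMap.sum_apply, ContinuousLinearMap.sub_apply,
      smul_eq_mul, WithLp.equiv_symm_apply, PiLp.toLp_apply]
    have hproj : ∀ (k : Fin n), (EuclideanSpace.proj (𝕜 := ℝ) k) w = w k := fun _ => rfl
    simp only [hproj, mul_comm (w _), Finset.sum_mul]
    rw [Finset.sum_comm]
    simp only [Finset.mul_sum]
    apply Finset.sum_congr rfl
    intro i _
    rw [Finset.sum_comm]
    apply Finset.sum_congr rfl
    intro j _
    simp only [mul_add, add_mul, ite_mul, mul_ite, zero_mul, mul_zero,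
      Finset.sum_add_distrib, Finset.sum_ite_eq', Finset.mem_univ, if_true]
    ring
  · intro v
    have key : ∀ i, ∑ j, P i j * (r i + γ * v j - v i) ^ 2
        = (r i - v i) ^ 2 + 2 * (r i - v i) * γ * (∑ j, P i j * v j)
          + γ ^ 2 * ∑ j, P i j * (v j) ^ 2 := by
      intro i
      have : ∑ j, P i j * (r i + γ * v j - v i) ^ 2
          = ∑ j, ((r i - v i) ^ 2 * P i j + 2 * (r i - v i) * γ * (P i j * v j)
            + γ ^ 2 * (P i j * (v j) ^ 2)) :=
        Finset.sum_congr rfl (by intros; ring)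
      rw [this, Finset.sum_add_distrib, Finset.sum_add_distrib,
        ← Finset.mul_sum, ← Finset.mul_sum, ← Finset.mul_sum, hP1 i]
      ring
    have h2 : ∀ i, μ i * (∑ j, P i j * (r i + γ * v j - v i) ^ 2)
        - μ i * (r i + γ * (∑ j, P i j * v j) - v i) ^ 2
        = γ ^ 2 * (μ i * ((∑ j, P i j * (v j) ^ 2) - (∑ j, P i j * v j) ^ 2)) := by
      intro i
      rw [key i]; ring
    rw [← mul_sub, ← Finset.sum_sub_distrib, Finset.sum_congr rfl fun i _ => h2 i,
      ← Finset.mul_sum]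
    ring
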